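/- Let f : ℝ → ℝ and let p, q, r ∈ ℝ² satisfy y(q) = y(r) = 0, q ≠ r, y(p) > 0, and convexHull ℝ {p, q, r} ⊆ T(f). Assume the triangle pqr has largest perimeter among all triangles contained in T(f), i.e. for all a, b, c ∈ ℝ² with convexHull ℝ {a, b, c} ⊆ T(f) one has dist a b + dist b c + dist c a ≤ dist p q + dist q r + dist r p. Then both internal base angles are at most π/2: ∠ p q r ≤ π/2 and ∠ p r q ≤ π/2 (where ∠ a b c denotes the Euclidean angle at the middle vertex b). -/

import Mathlib

open EuclideanGeometry

/-- The Euclidean plane ℝ². -/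
abbrev Plane := EuclideanSpace ℝ (Fin 2)

/-- The closed region bounded by the terrain `f` and its base (the x-axis). -/
def terrainRegion (f : ℝ → ℝ) : Set Plane := {p | 0 ≤ p 1 ∧ p 1 ≤ f (p 0)}

open Set RealInnerProductSpace in
private lemma dist_plane (a b : Plane) :
    dist a b = Real.sqrt ((a 0 - b 0) ^ 2 + (a 1 - b 1) ^ 2) := by
  rw [EuclideanSpace.dist_eq, Fin.sum_univ_two]
  simp [Real.dist_eq, sq_abs]

open Set RealInnerProductSpace in
private lemma aux_key (f : ℝ → ℝ) (p q r : Plane)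
    (hq : q 1 = 0) (hr : r 1 = 0) (hp : p 1 > 0)
    (hin : convexHull ℝ {p, q, r} ⊆ terrainRegion f)
    (hopt : ∀ a b c : Plane, convexHull ℝ {a, b, c} ⊆ terrainRegion f →
      dist a b + dist b c + dist c a ≤ dist p q + dist q r + dist r p) :
    ∠ p q r ≤ Real.pi / 2 := by
  by_contra hang
  push_neg at hang
  -- the inner product ⟪p - q, r - q⟫ is negative
  have hinner : (p 0 - q 0) * (r 0 - q 0) < 0 := by
    have h1 : ⟪p - q, r - q⟫ = (p 0 - q 0) * (r 0 - q 0) := by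
      simp [PiLp.inner_apply, Fin.sum_univ_two, hq, hr, PiLp.sub_apply]
      ring
    have h2 : ⟪p - q, r - q⟫ / (‖p - q‖ * ‖r - q‖) < 0 := by
      by_contra h
      push_neg at h
      have : ∠ p q r ≤ Real.pi / 2 := by
        rw [EuclideanGeometry.angle, InnerProductGeometry.angle,
          Real.arccos_le_pi_div_two]
        simpa [vsub_eq_sub] using h
      linarith
    have h3 : 0 ≤ ‖p - q‖ * ‖r - q‖ := by positivity
    rw [← h1]
    by_contra h
    push_neg at h
    exact absurd (div_nonneg h h3) (not_le.2 h2)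
  -- the foot of the perpendicular from p
  set q' : Plane := WithLp.toLp 2 (fun i : Fin 2 => if i = 0 then p 0 else 0) with hq'def
  have hq'0 : q' 0 = p 0 := rfl
  have hq'1 : q' 1 = 0 := rfl
  -- the new triangle is contained in the terrain region
  have hsub : convexHull ℝ {p, q', r} ⊆ terrainRegion f := by
    intro s hs
    rw [convexHull_insert ⟨q', by simp⟩, mem_convexJoin] at hs
    obtain ⟨x, hx, z, hz, hs⟩ := hs
    rw [mem_singleton_iff.1 hx] at hs
    clear hx
    rw [convexHull_pair] at hz
    obtain ⟨w, t, hw, ht, hwt, rfl⟩ := hz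
    obtain ⟨u, v, hu, hv, huv, rfl⟩ := hs
    -- the comparison point on segment p r
    have hseg : (u + v * w) • p + (v * t) • r ∈ convexHull ℝ ({p, q, r} : Set Plane) := by
      have hpm : p ∈ ({p, q, r} : Set Plane) := by simp
      have hrm : r ∈ ({p, q, r} : Set Plane) := by simp
      exact segment_subset_convexHull hpm hrm
        ⟨u + v * w, v * t, by positivity, by positivity, by nlinarith, rfl⟩
    obtain ⟨h0, h1⟩ := hin hseg
    have e0 : (u • p + v • (w • q' + t • r)) 0 = ((u + v * w) • p + (v * t) • r) 0 := by
      simp [PiLp.add_apply, PiLp.smul_apply, hq'0, smul_eq_mul]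
      ring
    have e1 : (u • p + v • (w • q' + t • r)) 1 = u * p 1 := by
      simp [PiLp.add_apply, PiLp.smul_apply, hq'1, hr, smul_eq_mul]
    have e1' : ((u + v * w) • p + (v * t) • r) 1 = (u + v * w) * p 1 := by
      simp [PiLp.add_apply, PiLp.smul_apply, hr, smul_eq_mul]
    constructor
    · rw [e1]; positivity
    · rw [e0, e1]
      refine le_trans ?_ h1
      rw [e1']
      nlinarith [mul_nonneg (mul_nonneg hv hw) hp.le]
  -- distances
  have dpq' : dist p q' = p 1 := by
    rw [dist_plane, hq'0, hq'1]
    rw [show (p 0 - p 0) ^ 2 + (p 1 - 0) ^ 2 = p 1 ^ 2 by ring]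
    exact Real.sqrt_sq hp.le
  have dq'r : dist q' r = |p 0 - r 0| := by
    rw [dist_plane, hq'0, hq'1, hr]
    rw [show (p 0 - r 0) ^ 2 + (0 - 0 : ℝ) ^ 2 = (p 0 - r 0) ^ 2 by ring]
    exact Real.sqrt_sq_eq_abs _
  have dqr : dist q r = |q 0 - r 0| := by
    rw [dist_plane, hq, hr]
    rw [show (q 0 - r 0) ^ 2 + (0 - 0 : ℝ) ^ 2 = (q 0 - r 0) ^ 2 by ring]
    exact Real.sqrt_sq_eq_abs _
  have dpq : dist p q = Real.sqrt ((p 0 - q 0) ^ 2 + p 1 ^ 2) := by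
    rw [dist_plane, hq]
    ring_nf
  have hd : p 0 - q 0 ≠ 0 := fun h => by rw [h] at hinner; linarith
  have habs : |p 0 - r 0| = |p 0 - q 0| + |q 0 - r 0| := by
    rcases mul_neg_iff.1 hinner with ⟨h1, h2⟩ | ⟨h1, h2⟩
    · rw [abs_of_pos (by linarith), abs_of_pos h1, abs_of_pos (by linarith)]
      ring
    · rw [abs_of_neg (by linarith), abs_of_neg h1, abs_of_neg (by linarith)]
      ring
  have hsqrt : Real.sqrt ((p 0 - q 0) ^ 2 + p 1 ^ 2) < |p 0 - q 0| + p 1 := by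
    have hpos : (0 : ℝ) < |p 0 - q 0| + p 1 := by
      have := abs_nonneg (p 0 - q 0); linarith
    rw [Real.sqrt_lt' hpos]
    nlinarith [abs_pos.2 hd, sq_abs (p 0 - q 0), hp]
  have := hopt p q' r hsub
  rw [dpq', dq'r, dpq, dqr, habs] at this
  linarith

theorem base_angles_at_most_right (f : ℝ → ℝ) (p q r : Plane)
    (hq : q 1 = 0) (hr : r 1 = 0) (hqr : q ≠ r) (hp : p 1 > 0)
    (hin : convexHull ℝ {p, q, r} ⊆ terrainRegion f)
    (hopt : ∀ a b c : Plane, convexHull ℝ {a, b, c} ⊆ terrainRegion f →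
      dist a b + dist b c + dist c a ≤ dist p q + dist q r + dist r p) :
    ∠ p q r ≤ Real.pi / 2 ∧ ∠ p r q ≤ Real.pi / 2 := by
  have hset : ({p, r, q} : Set Plane) = {p, q, r} := by
    rw [Set.pair_comm r q]
  have hperim : dist p r + dist r q + dist q p = dist p q + dist q r + dist r p := by
    rw [dist_comm p r, dist_comm r q, dist_comm q p]
    ring
  refine ⟨aux_key f p q r hq hr hp hin hopt, aux_key f p r q hr hq hp ?_ ?_⟩
  · rw [hset]; exact hin
  · intro a b c hc
    rw [hperim]
    exact hopt a b c hc
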